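/- Let r ≥ 2 and let SU(2)^r act on ℂ^{2r} via the block-diagonal embedding (A_1, …, A_r) ↦ diag(A_1, …, A_r) into U(2r). For every integer n with 2 ≤ n ≤ 2r−2, the representation of SU(2)^r on the exterior power ⋀^n(ℂ^{2r}) is not multiplicity-free; in particular, for n even the vectors (e_1∧e_2) ∧ ⋯ ∧ (e_{n−3}∧e_{n−2}) ∧ (e_{n−1}∧e_n) and (e_1∧e_2) ∧ ⋯ ∧ (e_{n−3}∧e_{n−2}) ∧ (e_{n+1}∧e_{n+2}) span two distinct copies of the trivial representation of SU(2)^r. -/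

import Mathlib

noncomputable section

/-- A representation is irreducible if the space is nontrivial and the only invariant
subspaces are `⊥` and `⊤`. -/
def IsIrred {G V : Type*} [Group G] [AddCommGroup V] [Module ℂ V]
    (ρ : Representation ℂ G V) : Prop :=
  Nontrivial V ∧ ∀ W : Submodule ℂ V, (∀ g : G, ∀ v ∈ W, ρ g v ∈ W) → W = ⊥ ∨ W = ⊤

/-- The space of equivariant (intertwining) linear maps between two representations. -/
def EquivMaps {G V W : Type*} [Group G] [AddCommGroup V] [Module ℂ V] [AddCommGroup W]
    [Module ℂ W] (σ : Representation ℂ G V) (ρ : Representation ℂ G W) :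
    Submodule ℂ (V →ₗ[ℂ] W) where
  carrier := {f | ∀ g : G, f ∘ₗ σ g = ρ g ∘ₗ f}
  add_mem' := fun ha hb g => by rw [LinearMap.add_comp, LinearMap.comp_add, ha g, hb g]
  zero_mem' := fun g => by rw [LinearMap.zero_comp, LinearMap.comp_zero]
  smul_mem' := fun c a ha g => by rw [LinearMap.smul_comp, LinearMap.comp_smul, ha g]

/-- A representation `ρ` of a group `G` is multiplicity-free if every irreducible
finite-dimensional representation `σ` of `G` satisfies `dim Hom_G(σ, ρ) ≤ 1`. -/
def MultFree {G W : Type*} [Group G] [AddCommGroup W] [Module ℂ W]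
    (ρ : Representation ℂ G W) : Prop :=
  ∀ (V : Type) [AddCommGroup V] [Module ℂ V] [FiniteDimensional ℂ V]
    (σ : Representation ℂ G V), IsIrred σ → Module.finrank ℂ (EquivMaps σ ρ) ≤ 1

/-- Equivalence (isomorphism) of two representations. -/
def RepEquiv {G V W : Type*} [Group G] [AddCommGroup V] [Module ℂ V] [AddCommGroup W]
    [Module ℂ W] (σ : Representation ℂ G V) (ρ : Representation ℂ G W) : Prop :=
  ∃ e : V ≃ₗ[ℂ] W, ∀ (g : G) (v : V), e (σ g v) = ρ g (e v)

/-- Restriction of a representation to an invariant submodule. -/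
def resSub {G V : Type*} [Group G] [AddCommGroup V] [Module ℂ V]
    (ρ : Representation ℂ G V) (W : Submodule ℂ V) (h : ∀ g : G, ∀ v ∈ W, ρ g v ∈ W) :
    Representation ℂ G W where
  toFun g := (ρ g).restrict (h g)
  map_one' := by ext w; simp [LinearMap.restrict_apply]
  map_mul' g g' := by ext w; simp [LinearMap.restrict_apply]

/-- The tensor product (twist) of a representation with a one-dimensional character. -/
def charTwist {G V : Type*} [Group G] [AddCommGroup V] [Module ℂ V]
    (χ : G →* ℂˣ) (ρ : Representation ℂ G V) : Representation ℂ G V where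
  toFun g := (χ g : ℂ) • ρ g
  map_one' := by simp
  map_mul' g g' := by
    ext v
    show (↑(χ (g * g')) : ℂ) • ρ (g * g') v = ((χ g : ℂ) • ρ g) (((χ g' : ℂ) • ρ g') v)
    rw [map_mul, map_mul, Units.val_mul, LinearMap.smul_apply, LinearMap.smul_apply,
      Module.End.mul_apply, map_smul, mul_smul, smul_comm]

end
noncomputable section ExtPart

lemma map_mem_exteriorPower {M N : Type*} [AddCommGroup M] [Module ℂ M] [AddCommGroup N]
    [Module ℂ N] (f : M →ₗ[ℂ] N) (j : ℕ) {x : ExteriorAlgebra ℂ M} (hx : x ∈ ⋀[ℂ]^j M) :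
    ExteriorAlgebra.map f x ∈ ⋀[ℂ]^j N := by
  rw [← ExteriorAlgebra.ιMulti_span_fixedDegree] at hx ⊢
  induction hx using Submodule.span_induction with
  | mem x h =>
    obtain ⟨v, rfl⟩ := h
    rw [ExteriorAlgebra.map_apply_ιMulti]
    exact Submodule.subset_span ⟨_, rfl⟩
  | zero => simp
  | add x y _ _ hx hy => rw [map_add]; exact Submodule.add_mem _ hx hy
  | smul c x _ hx => rw [map_smul]; exact Submodule.smul_mem _ c hx

/-- Given a group `G` mapped into `n × n` complex matrices by a homomorphism `φ`, the induced
representation of `G` on the `j`-th exterior power `⋀^j(ℂ^n)`, obtained functorially from the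
standard representation on `ℂ^n`. -/
def extPowRep {n : ℕ} {G : Type*} [Group G] (φ : G →* Matrix (Fin n) (Fin n) ℂ) (j : ℕ) :
    Representation ℂ G (⋀[ℂ]^j (Fin n → ℂ)) where
  toFun g := ((ExteriorAlgebra.map (Matrix.toLin' (φ g))).toLinearMap).restrict
    fun x hx => map_mem_exteriorPower _ j hx
  map_one' := by
    refine LinearMap.ext fun x => Subtype.ext ?_
    show ExteriorAlgebra.map (Matrix.toLin' (φ 1)) (x : ExteriorAlgebra ℂ (Fin n → ℂ))
      = (x : ExteriorAlgebra ℂ (Fin n → ℂ))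
    rw [map_one, Matrix.toLin'_one, ExteriorAlgebra.map_id, AlgHom.id_apply]
  map_mul' g h := by
    refine LinearMap.ext fun x => Subtype.ext ?_
    show ExteriorAlgebra.map (Matrix.toLin' (φ (g * h))) (x : ExteriorAlgebra ℂ (Fin n → ℂ))
      = ExteriorAlgebra.map (Matrix.toLin' (φ g))
          (ExteriorAlgebra.map (Matrix.toLin' (φ h)) (x : ExteriorAlgebra ℂ (Fin n → ℂ)))
    rw [map_mul, Matrix.toLin'_mul, ← ExteriorAlgebra.map_comp_map, AlgHom.comp_apply]

/-- The wedge product `e_{s 0} ∧ ⋯ ∧ e_{s (j-1)}` of standard basis vectors of `ℂ^n`, as an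
element of the `j`-th exterior power `⋀^j(ℂ^n)`. -/
def wedgeVec {n : ℕ} (j : ℕ) (s : Fin j → Fin n) : ⋀[ℂ]^j (Fin n → ℂ) :=
  ⟨ExteriorAlgebra.ιMulti ℂ j fun t => Pi.single (s t) (1 : ℂ),
    ExteriorAlgebra.ιMulti_range ℂ j (Set.mem_range_self _)⟩

end ExtPart
noncomputable section SUPart

open Matrix

/-- `SU(n)`: the subgroup of the unitary group `U(n)` of matrices of determinant `1`. -/
def SUgrp (n : ℕ) : Subgroup (Matrix.unitaryGroup (Fin n) ℂ) where
  carrier := {g | Matrix.det (g : Matrix (Fin n) (Fin n) ℂ) = 1}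
  one_mem' := by
    show Matrix.det ((1 : Matrix.unitaryGroup (Fin n) ℂ) : Matrix (Fin n) (Fin n) ℂ) = 1
    rw [OneMemClass.coe_one, Matrix.det_one]
  mul_mem' := by
    intro a b ha hb
    show Matrix.det ((a * b : Matrix.unitaryGroup (Fin n) ℂ) : Matrix (Fin n) (Fin n) ℂ) = 1
    rw [MulMemClass.coe_mul, Matrix.det_mul, ha, hb, one_mul]
  inv_mem' := by
    intro a ha
    show Matrix.det ((a⁻¹ : Matrix.unitaryGroup (Fin n) ℂ) : Matrix (Fin n) (Fin n) ℂ) = 1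
    have h1 : (a : Matrix (Fin n) (Fin n) ℂ) *
        ((a⁻¹ : Matrix.unitaryGroup (Fin n) ℂ) : Matrix (Fin n) (Fin n) ℂ) = 1 := by
      rw [← MulMemClass.coe_mul, mul_inv_cancel, OneMemClass.coe_one]
    have h2 := congrArg Matrix.det h1
    rw [Matrix.det_mul, Matrix.det_one, ha, one_mul] at h2
    exact h2

/-- The coercion of `SU(m)` into complex matrices, as a monoid homomorphism. -/
def suCoeHom (m : ℕ) : SUgrp m →* Matrix (Fin m) (Fin m) ℂ :=
  (Submonoid.subtype (Matrix.unitaryGroup (Fin m) ℂ)).comp (SUgrp m).subtype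

/-- The index identification `Fin 2 × Fin r ≃ Fin (2r)` sending `(a, k) ↦ 2k + a`, so that
the `k`-th block occupies the consecutive pair of indices `2k, 2k+1`. -/
def pairEquiv (r : ℕ) : Fin 2 × Fin r ≃ Fin (2 * r) :=
  (Equiv.prodComm (Fin 2) (Fin r)).trans
    ((finProdFinEquiv : Fin r × Fin 2 ≃ Fin (r * 2)).trans (finCongr (by ring)))

/-- The block-diagonal embedding `(A₁, …, A_r) ↦ diag(A₁, …, A_r)` of `SU(2)^r` into the
monoid of `2r × 2r` complex matrices, with `A_k` occupying rows and columns `2k-1, 2k`. -/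
def suBlockMatrixHom (r : ℕ) : (Fin r → SUgrp 2) →* Matrix (Fin (2 * r)) (Fin (2 * r)) ℂ where
  toFun B := Matrix.reindexAlgEquiv ℂ ℂ (pairEquiv r)
    (Matrix.blockDiagonal fun k => suCoeHom 2 (B k))
  map_one' := by
    have h : (fun k : Fin r => suCoeHom 2 ((1 : Fin r → SUgrp 2) k))
        = fun _ => (1 : Matrix (Fin 2) (Fin 2) ℂ) := by
      funext k
      show suCoeHom 2 1 = 1
      rw [_root_.map_one]
    show Matrix.reindexAlgEquiv ℂ ℂ (pairEquiv r)
      (Matrix.blockDiagonal fun k : Fin r => suCoeHom 2 ((1 : Fin r → SUgrp 2) k)) = 1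
    rw [h]
    have h2 : (fun _ : Fin r => (1 : Matrix (Fin 2) (Fin 2) ℂ))
        = (1 : Fin r → Matrix (Fin 2) (Fin 2) ℂ) := rfl
    rw [h2, Matrix.blockDiagonal_one, _root_.map_one]
  map_mul' B C := by
    have h : (fun k : Fin r => suCoeHom 2 ((B * C) k))
        = fun k => suCoeHom 2 (B k) * suCoeHom 2 (C k) := by
      funext k
      show suCoeHom 2 (B k * C k) = _
      rw [_root_.map_mul]
    show Matrix.reindexAlgEquiv ℂ ℂ (pairEquiv r)
        (Matrix.blockDiagonal fun k : Fin r => suCoeHom 2 ((B * C) k))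
      = Matrix.reindexAlgEquiv ℂ ℂ (pairEquiv r)
          (Matrix.blockDiagonal fun k : Fin r => suCoeHom 2 (B k)) *
        Matrix.reindexAlgEquiv ℂ ℂ (pairEquiv r)
          (Matrix.blockDiagonal fun k : Fin r => suCoeHom 2 (C k))
    rw [h, Matrix.blockDiagonal_mul, _root_.map_mul]

lemma suBlockMatrixHom_mem_unitary (r : ℕ) (B : Fin r → SUgrp 2) :
    suBlockMatrixHom r B ∈ Matrix.unitaryGroup (Fin (2 * r)) ℂ := by
  rw [Matrix.mem_unitaryGroup_iff]
  have hD : ∀ k : Fin r, suCoeHom 2 (B k) * (suCoeHom 2 (B k))ᴴ = 1 := by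
    intro k
    rw [← Matrix.star_eq_conjTranspose]
    exact Unitary.mul_star_self_of_mem (B k).1.2
  
  show Matrix.reindexAlgEquiv ℂ ℂ (pairEquiv r)
      (Matrix.blockDiagonal fun k => suCoeHom 2 (B k)) *
    star (Matrix.reindexAlgEquiv ℂ ℂ (pairEquiv r)
      (Matrix.blockDiagonal fun k => suCoeHom 2 (B k))) = 1
  rw [Matrix.star_eq_conjTranspose, Matrix.reindexAlgEquiv_apply,
    Matrix.conjTranspose_reindex, Matrix.blockDiagonal_conjTranspose,
    ← Matrix.reindexAlgEquiv_apply ℂ ℂ (pairEquiv r),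
    ← Matrix.reindexAlgEquiv_apply ℂ ℂ (pairEquiv r), ← _root_.map_mul,
    ← Matrix.blockDiagonal_mul]
  have h1 : (fun k => suCoeHom 2 (B k) * (suCoeHom 2 (B k))ᴴ)
      = fun _ => (1 : Matrix (Fin 2) (Fin 2) ℂ) := funext fun k => hD k
  rw [h1]
  have h2 : (fun _ : Fin r => (1 : Matrix (Fin 2) (Fin 2) ℂ))
      = (1 : Fin r → Matrix (Fin 2) (Fin 2) ℂ) := rfl
  rw [h2, Matrix.blockDiagonal_one, _root_.map_one]

/-- The block-diagonal embedding of `SU(2)^r` into the unitary group `U(2r)`, `n = 2r` even: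
`(A₁, …, A_r) ↦ diag(A₁, …, A_r)`. -/
def suBlockHom (r : ℕ) : (Fin r → SUgrp 2) →* Matrix.unitaryGroup (Fin (2 * r)) ℂ :=
  (suBlockMatrixHom r).codRestrict (Matrix.unitaryGroup (Fin (2 * r)) ℂ)
    (suBlockMatrixHom_mem_unitary r)

end SUPart

open ExteriorAlgebra in
lemma pair_det {M : Type*} [AddCommGroup M] [Module ℂ M] (x y : M) (a b c d : ℂ) :
    ι ℂ (a • x + c • y) * ι ℂ (b • x + d • y) = (a*d - c*b) • (ι ℂ x * ι ℂ y) := by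
  have hyx : ι ℂ y * ι ℂ x = -(ι ℂ x * ι ℂ y) := by
    have := ExteriorAlgebra.ι_add_mul_swap (R := ℂ) x y
    linear_combination (norm := module) this
  simp only [map_add, map_smul, add_mul, mul_add, smul_mul_assoc, mul_smul_comm,
    ExteriorAlgebra.ι_sq_zero, smul_zero, hyx, smul_smul]
  module

lemma prod_pairs {A : Type*} [Monoid A] : ∀ (m : ℕ) (a b : Fin (2*m) → A),
    (∀ k : ℕ, ∀ hk : k < m, a ⟨2*k, by omega⟩ * a ⟨2*k+1, by omega⟩
      = b ⟨2*k, by omega⟩ * b ⟨2*k+1, by omega⟩) →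
    (List.ofFn a).prod = (List.ofFn b).prod := by
  have expand : ∀ (m : ℕ) (a : Fin (2*(m+1)) → A), (List.ofFn a).prod
      = (a ⟨0, by omega⟩ * a ⟨1, by omega⟩)
        * (List.ofFn fun i : Fin (2*m) => a ⟨i.val+2, by omega⟩).prod := by
    intro m a
    rw [List.ofFn_succ (f := a), List.ofFn_succ, List.prod_cons, List.prod_cons, mul_assoc]
    rfl
  intro m
  induction m with
  | zero => intro a b _; rfl
  | succ m ih =>
    intro a b h
    rw [expand m a, expand m b, h 0 (by omega),
      ih (fun i => a ⟨i.val+2, by omega⟩) (fun i => b ⟨i.val+2, by omega⟩)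
        (fun k hk => h (k+1) (by omega))]
section St14
open ExteriorAlgebra

lemma pairEquiv_val (r : ℕ) (a : Fin 2) (k : Fin r) :
    ((pairEquiv r (a, k)) : ℕ) = 2 * k.val + a.val := by
  simp [pairEquiv, finProdFinEquiv]
  omega

lemma suBlock_entry (r : ℕ) (g : Fin r → SUgrp 2) (p q : Fin 2 × Fin r) :
    suBlockMatrixHom r g (pairEquiv r p) (pairEquiv r q)
      = if p.2 = q.2 then suCoeHom 2 (g p.2) p.1 q.1 else 0 := by
  show (Matrix.reindexAlgEquiv ℂ ℂ (pairEquiv r)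
    (Matrix.blockDiagonal fun k => suCoeHom 2 (g k))) (pairEquiv r p) (pairEquiv r q) = _
  rw [Matrix.reindexAlgEquiv_apply, Matrix.reindex_apply, Matrix.submatrix_apply,
    Equiv.symm_apply_apply, Equiv.symm_apply_apply]
  rcases p with ⟨a, k⟩
  rcases q with ⟨b, l⟩
  rw [Matrix.blockDiagonal_apply]

end St14

noncomputable section St14b
open ExteriorAlgebra

/-- basis vector of block `k`, slot `a`. -/
def Eb (r : ℕ) (a : Fin 2) (k : Fin r) : Fin (2*r) → ℂ := Pi.single (pairEquiv r (a, k)) 1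

lemma block_apply (r : ℕ) (g : Fin r → SUgrp 2) (a : Fin 2) (k : Fin r) :
    Matrix.toLin' (suBlockMatrixHom r g) (Eb r a k)
      = suCoeHom 2 (g k) 0 a • Eb r 0 k + suCoeHom 2 (g k) 1 a • Eb r 1 k := by
  rw [Matrix.toLin'_apply, Eb, Matrix.mulVec_single_one]
  funext i
  obtain ⟨⟨b, l⟩, rfl⟩ := (pairEquiv r).surjective i
  have hent := suBlock_entry r g (b, l) (a, k)
  simp only [Matrix.col_apply]
  rw [hent]
  have hinj := (pairEquiv r).injective
  simp only [Pi.add_apply, Pi.smul_apply, Eb, Pi.single_apply, hinj.eq_iff, Prod.mk.injEq,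
    smul_eq_mul]
  by_cases hl : l = k
  · subst hl
    fin_cases b <;> simp
  · simp [hl, fun h : (0 : Fin 2) = b ∧ k = l => hl h.2.symm,
      fun h : (1 : Fin 2) = b ∧ k = l => hl h.2.symm]

lemma pair_inv (r : ℕ) (g : Fin r → SUgrp 2) (k : Fin r) :
    ι ℂ (Matrix.toLin' (suBlockMatrixHom r g) (Eb r 0 k))
      * ι ℂ (Matrix.toLin' (suBlockMatrixHom r g) (Eb r 1 k))
      = ι ℂ (Eb r 0 k) * ι ℂ (Eb r 1 k) := by
  rw [block_apply, block_apply, pair_det]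
  have hdet : (g k).1.1.det = 1 := (g k).2
  rw [Matrix.det_fin_two] at hdet
  have : suCoeHom 2 (g k) 0 0 * suCoeHom 2 (g k) 1 1
      - suCoeHom 2 (g k) 1 0 * suCoeHom 2 (g k) 0 1 = 1 := by
    rw [mul_comm (suCoeHom 2 (g k) 1 0)]
    exact hdet
  rw [this, one_smul]

/-- The family of `2m` basis vectors consisting of both slots of blocks `β 0, …, β (m-1)`. -/
def pairVec (r m : ℕ) (β : Fin m → Fin r) : Fin (2*m) → (Fin (2*r) → ℂ) :=
  fun t => Eb r ⟨t.val % 2, by omega⟩ (β ⟨t.val / 2, by omega⟩)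

lemma pairVec_even (r m : ℕ) (β : Fin m → Fin r) (k : ℕ) (hk : k < m) :
    pairVec r m β ⟨2*k, by omega⟩ = Eb r 0 (β ⟨k, hk⟩) := by
  have h2 : (⟨(2*k) % 2, by omega⟩ : Fin 2) = (0 : Fin 2) := by
    apply Fin.ext; simp only [Fin.val_zero]; omega
  have hm : (⟨(2*k) / 2, by omega⟩ : Fin m) = ⟨k, hk⟩ := by
    apply Fin.ext; show (2*k)/2 = k; omega
  show Eb r ⟨(2*k) % 2, by omega⟩ (β ⟨(2*k) / 2, by omega⟩) = _
  rw [h2, hm]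

lemma pairVec_odd (r m : ℕ) (β : Fin m → Fin r) (k : ℕ) (hk : k < m) :
    pairVec r m β ⟨2*k+1, by omega⟩ = Eb r 1 (β ⟨k, hk⟩) := by
  have h2 : (⟨(2*k+1) % 2, by omega⟩ : Fin 2) = (1 : Fin 2) := by
    apply Fin.ext; simp only [Fin.val_one]; omega
  have hm : (⟨(2*k+1) / 2, by omega⟩ : Fin m) = ⟨k, hk⟩ := by
    apply Fin.ext; show (2*k+1)/2 = k; omega
  show Eb r ⟨(2*k+1) % 2, by omega⟩ (β ⟨(2*k+1) / 2, by omega⟩) = _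
  rw [h2, hm]

lemma inv_wedge (r m : ℕ) (g : Fin r → SUgrp 2) (β : Fin m → Fin r) :
    ExteriorAlgebra.map (Matrix.toLin' (suBlockMatrixHom r g))
      (ExteriorAlgebra.ιMulti ℂ (2*m) (pairVec r m β))
      = ExteriorAlgebra.ιMulti ℂ (2*m) (pairVec r m β) := by
  rw [ExteriorAlgebra.map_apply_ιMulti, ExteriorAlgebra.ιMulti_apply,
    ExteriorAlgebra.ιMulti_apply]
  refine prod_pairs m _ _ ?_
  intro k hk
  simp only [Function.comp_apply]
  rw [pairVec_even r m β k hk, pairVec_odd r m β k hk]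
  exact pair_inv r g (β ⟨k, hk⟩)

/-- Coordinate-extraction determinant functional on the exterior algebra. -/
def phiDet (N n : ℕ) (s : Fin n → Fin N) :
    ExteriorAlgebra ℂ (Fin N → ℂ) →ₗ[ℂ] ℂ :=
  ExteriorAlgebra.liftAlternating fun i =>
    if h : n = i then
      h ▸ ((Matrix.detRowAlternating : (Fin n → ℂ) [⋀^Fin n]→ₗ[ℂ] ℂ).compLinearMap
        (LinearMap.funLeft ℂ ℂ s))
    else 0

lemma phiDet_ιMulti (N n : ℕ) (s : Fin n → Fin N) (v : Fin n → (Fin N → ℂ)) :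
    phiDet N n s (ExteriorAlgebra.ιMulti ℂ n v)
      = Matrix.det (Matrix.of fun i j => v i (s j)) := by
  rw [phiDet, ExteriorAlgebra.liftAlternating_apply_ιMulti, dif_pos rfl]
  rfl

lemma phiDet_diag (N n : ℕ) (s : Fin n → Fin N) (hs : Function.Injective s) :
    phiDet N n s (ExteriorAlgebra.ιMulti ℂ n (fun i => Pi.single (s i) (1:ℂ))) = 1 := by
  rw [phiDet_ιMulti]
  have : (Matrix.of fun i j => (Pi.single (s i) 1 : Fin N → ℂ) (s j)) = 1 := by
    ext i j
    simp [Pi.single_apply, hs.eq_iff, Matrix.one_apply, eq_comm]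
  rw [this, Matrix.det_one]

lemma phiDet_off (N n : ℕ) (s c : Fin n → Fin N) (i₀ : Fin n) (h : ∀ j, c i₀ ≠ s j) :
    phiDet N n s (ExteriorAlgebra.ιMulti ℂ n (fun i => Pi.single (c i) (1:ℂ))) = 0 := by
  rw [phiDet_ιMulti]
  apply Matrix.det_eq_zero_of_row_eq_zero i₀
  intro j
  simp [Pi.single_apply, (h j).symm]

instance extPow_finite (N n : ℕ) : Module.Finite ℂ ↥(⋀[ℂ]^n (Fin N → ℂ)) := by
  have hle : (⋀[ℂ]^n (Fin N → ℂ)) ≤ Submodule.span ℂ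
      (Set.range fun d : Fin n → Fin N =>
        ExteriorAlgebra.ιMulti ℂ n fun i => (Pi.single (d i) 1 : Fin N → ℂ)) := by
    rw [← ExteriorAlgebra.ιMulti_span_fixedDegree]
    refine Submodule.span_le.2 ?_
    rintro x ⟨v, rfl⟩
    have hv : v = fun i => ∑ j, v i j • (Pi.single j 1 : Fin N → ℂ) := by
      funext i k
      simp [Pi.single_apply, Finset.sum_ite_eq', mul_comm]
    rw [hv, show (ExteriorAlgebra.ιMulti ℂ n) (fun i => ∑ j, v i j • (Pi.single j 1 : Fin N → ℂ))
      = (ExteriorAlgebra.ιMulti ℂ n).toMultilinearMap (fun i => ∑ j, v i j • (Pi.single j 1 : Fin N → ℂ))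
      from rfl, MultilinearMap.map_sum]
    apply Submodule.sum_mem
    intro d _
    rw [MultilinearMap.map_smul_univ]
    exact Submodule.smul_mem _ _ (Submodule.subset_span (Set.mem_range_self d))
  have : FiniteDimensional ℂ (Submodule.span ℂ
      (Set.range fun d : Fin n → Fin N =>
        ExteriorAlgebra.ιMulti ℂ n fun i => (Pi.single (d i) 1 : Fin N → ℂ))) :=
    FiniteDimensional.span_of_finite ℂ (Set.finite_range _)
  exact Submodule.finiteDimensional_of_le hle

lemma not_multFree_of_two {G W : Type*} [Group G] [AddCommGroup W] [Module ℂ W]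
    [Module.Finite ℂ W] (ρ : Representation ℂ G W) (V : Type) [AddCommGroup V] [Module ℂ V]
    [FiniteDimensional ℂ V] (σ : Representation ℂ G V) (hσ : IsIrred σ) (F₁ F₂ : V →ₗ[ℂ] W)
    (h₁ : F₁ ∈ EquivMaps σ ρ) (h₂ : F₂ ∈ EquivMaps σ ρ)
    (hind : ∀ a b : ℂ, a • F₁ + b • F₂ = 0 → a = 0 ∧ b = 0) : ¬ MultFree ρ := by
  intro hMF
  have hle := hMF V σ hσ
  have hli : LinearIndependent ℂ ![(⟨F₁, h₁⟩ : EquivMaps σ ρ), ⟨F₂, h₂⟩] := by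
    rw [LinearIndependent.pair_iff]
    intro a b hab
    apply hind a b
    have := congrArg Subtype.val hab
    simpa using this
  have hcard := hli.fintype_card_le_finrank
  simp only [Fintype.card_fin] at hcard
  omega

lemma trivial_irred (G : Type*) [Group G] :
    IsIrred (Representation.trivial ℂ (G := G) (V := ℂ)) := by
  refine ⟨inferInstance, fun W _ => ?_⟩
  rcases eq_or_ne W ⊥ with h | h
  · exact Or.inl h
  · refine Or.inr (Submodule.eq_top_iff'.2 fun x => ?_)
    obtain ⟨y, hyW, hy⟩ := Submodule.ne_bot_iff _ |>.1 h
    have : x = (x * y⁻¹) • y := by rw [smul_eq_mul, mul_assoc, inv_mul_cancel₀ hy, mul_one]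
    rw [this]
    exact W.smul_mem _ hyW

lemma extPowRep_coe {N : ℕ} {G : Type*} [Group G] (φ : G →* Matrix (Fin N) (Fin N) ℂ)
    (j : ℕ) (g : G) (w : ⋀[ℂ]^j (Fin N → ℂ)) :
    ((extPowRep φ j g w : ⋀[ℂ]^j (Fin N → ℂ)) : ExteriorAlgebra ℂ (Fin N → ℂ))
      = ExteriorAlgebra.map (Matrix.toLin' (φ g)) (w : ExteriorAlgebra ℂ (Fin N → ℂ)) := rfl

lemma span_singleton_equiv {G W : Type*} [Group G] [AddCommGroup W] [Module ℂ W]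
    (ρ : Representation ℂ G W) (w : W) (hw : ∀ g, ρ g w = w) :
    LinearMap.toSpanSingleton ℂ W w ∈ EquivMaps (Representation.trivial ℂ (G := G) (V := ℂ)) ρ := by
  intro g
  refine LinearMap.ext fun c => ?_
  show LinearMap.toSpanSingleton ℂ W w (Representation.trivial ℂ G ℂ g c) = ρ g (c • w)
  rw [map_smul, hw g]
  rfl

lemma pairVec_eq_single (r m : ℕ) (β : Fin m → Fin r) (c : Fin (2*m) → Fin (2*r))
    (hc : ∀ t : Fin (2*m), (c t).val
      = 2 * (β ⟨t.val/2, by omega⟩).val + t.val % 2) :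
    pairVec r m β = fun t => (Pi.single (c t) 1 : Fin (2*r) → ℂ) := by
  funext t
  have hidx : pairEquiv r (⟨t.val % 2, by omega⟩, β ⟨t.val / 2, by omega⟩) = c t := by
    apply Fin.ext
    rw [pairEquiv_val]
    exact (hc t).symm
  exact congrArg (fun i => (Pi.single i 1 : Fin (2*r) → ℂ)) hidx

set_option maxHeartbeats 1000000 in
lemma even_core (r m : ℕ) (hr : 2 ≤ r) (hm : 1 ≤ m) (hmr : 2 * m ≤ 2 * r - 2)
    (s₁ s₂ : Fin (2*m) → Fin (2*r))
    (h1 : ∀ t, (s₁ t : ℕ) = (t : ℕ))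
    (h2 : ∀ t, (s₂ t : ℕ) = if (t : ℕ) < 2*m - 2 then (t : ℕ) else (t : ℕ) + 2) :
    (¬ MultFree (extPowRep (suBlockMatrixHom r) (2*m))) ∧
    ∃ w₁ w₂ : ⋀[ℂ]^(2*m) (Fin (2 * r) → ℂ),
      (w₁ : ExteriorAlgebra ℂ (Fin (2 * r) → ℂ))
        = ExteriorAlgebra.ιMulti ℂ (2*m) (fun t => (Pi.single (s₁ t) 1 : Fin (2*r) → ℂ)) ∧
      (w₂ : ExteriorAlgebra ℂ (Fin (2 * r) → ℂ))
        = ExteriorAlgebra.ιMulti ℂ (2*m) (fun t => (Pi.single (s₂ t) 1 : Fin (2*r) → ℂ)) ∧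
      LinearIndependent ℂ ![w₁, w₂] ∧
      ∀ g : Fin r → SUgrp 2,
        extPowRep (suBlockMatrixHom r) (2*m) g w₁ = w₁ ∧
        extPowRep (suBlockMatrixHom r) (2*m) g w₂ = w₂ := by
  have hv₁ : pairVec r m (fun k => (⟨(k : ℕ), by have := k.isLt; omega⟩ : Fin r))
      = fun t => (Pi.single (s₁ t) 1 : Fin (2*r) → ℂ) := by
    apply pairVec_eq_single
    intro t
    rw [h1 t]
    show (t : ℕ) = 2 * ((t : ℕ)/2) + (t : ℕ) % 2
    omega
  have hv₂ : pairVec r m (fun k =>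
        (⟨if (k : ℕ) < m - 1 then (k : ℕ) else (k : ℕ) + 1,
          by have := k.isLt; split <;> omega⟩ : Fin r))
      = fun t => (Pi.single (s₂ t) 1 : Fin (2*r) → ℂ) := by
    apply pairVec_eq_single
    intro t
    rw [h2 t]
    show (if (t : ℕ) < 2*m - 2 then (t : ℕ) else (t : ℕ) + 2)
      = 2 * (if (t : ℕ)/2 < m - 1 then (t : ℕ)/2 else (t : ℕ)/2 + 1) + (t : ℕ) % 2
    have := t.isLt
    split_ifs <;> omega
  have hW₁mem : ExteriorAlgebra.ιMulti ℂ (2*m)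
      (fun t => (Pi.single (s₁ t) 1 : Fin (2*r) → ℂ)) ∈ ⋀[ℂ]^(2*m) (Fin (2*r) → ℂ) :=
    ExteriorAlgebra.ιMulti_range ℂ _ (Set.mem_range_self _)
  have hW₂mem : ExteriorAlgebra.ιMulti ℂ (2*m)
      (fun t => (Pi.single (s₂ t) 1 : Fin (2*r) → ℂ)) ∈ ⋀[ℂ]^(2*m) (Fin (2*r) → ℂ) :=
    ExteriorAlgebra.ιMulti_range ℂ _ (Set.mem_range_self _)
  refine ?_
  set W₁ := ExteriorAlgebra.ιMulti ℂ (2*m) (fun t => (Pi.single (s₁ t) 1 : Fin (2*r) → ℂ))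
  set W₂ := ExteriorAlgebra.ιMulti ℂ (2*m) (fun t => (Pi.single (s₂ t) 1 : Fin (2*r) → ℂ))
  have hinv₁ : ∀ g : Fin r → SUgrp 2,
      extPowRep (suBlockMatrixHom r) (2*m) g ⟨W₁, hW₁mem⟩ = ⟨W₁, hW₁mem⟩ := by
    intro g
    apply Subtype.ext
    rw [extPowRep_coe]
    show ExteriorAlgebra.map _ W₁ = W₁
    rw [show W₁ = ExteriorAlgebra.ιMulti ℂ (2*m)
      (pairVec r m (fun k => (⟨(k : ℕ), by have := k.isLt; omega⟩ : Fin r))) by rw [hv₁]]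
    exact inv_wedge r m g _
  have hinv₂ : ∀ g : Fin r → SUgrp 2,
      extPowRep (suBlockMatrixHom r) (2*m) g ⟨W₂, hW₂mem⟩ = ⟨W₂, hW₂mem⟩ := by
    intro g
    apply Subtype.ext
    rw [extPowRep_coe]
    show ExteriorAlgebra.map _ W₂ = W₂
    rw [show W₂ = ExteriorAlgebra.ιMulti ℂ (2*m)
      (pairVec r m (fun k =>
        (⟨if (k : ℕ) < m - 1 then (k : ℕ) else (k : ℕ) + 1,
          by have := k.isLt; split <;> omega⟩ : Fin r))) by rw [hv₂]]
    exact inv_wedge r m g _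
  have hs₁inj : Function.Injective s₁ := by
    intro x y h
    have hval := congrArg Fin.val h
    rw [h1 x, h1 y] at hval
    exact Fin.ext hval
  have hs₂inj : Function.Injective s₂ := by
    intro x y h
    have hval := congrArg Fin.val h
    rw [h2 x, h2 y] at hval
    apply Fin.ext
    split_ifs at hval <;> omega
  have h11 : phiDet (2*r) (2*m) s₁ W₁ = 1 := phiDet_diag _ _ _ hs₁inj
  have h22 : phiDet (2*r) (2*m) s₂ W₂ = 1 := phiDet_diag _ _ _ hs₂inj
  have hi₀ : 2*m - 2 < 2*m := by omega
  have hi₀v : ((⟨2*m - 2, hi₀⟩ : Fin (2*m)) : ℕ) = 2*m - 2 := rfl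
  have h12 : phiDet (2*r) (2*m) s₁ W₂ = 0 := by
    apply phiDet_off (2*r) (2*m) s₁ s₂ ⟨2*m - 2, hi₀⟩
    intro j h
    have hval := congrArg Fin.val h
    rw [h2 _, h1 j, hi₀v] at hval
    have := j.isLt
    split_ifs at hval <;> omega
  have h21 : phiDet (2*r) (2*m) s₂ W₁ = 0 := by
    apply phiDet_off (2*r) (2*m) s₂ s₁ ⟨2*m - 2, hi₀⟩
    intro j h
    have hval := congrArg Fin.val h
    rw [h1 _, h2 j, hi₀v] at hval
    split_ifs at hval <;> omega
  have hind : ∀ a b : ℂ, a • W₁ + b • W₂ = 0 → a = 0 ∧ b = 0 := by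
    intro a b hab
    constructor
    · have hx := congrArg (phiDet (2*r) (2*m) s₁) hab
      rw [map_add, map_smul, map_smul, map_zero, h11, h12, smul_zero, add_zero,
        smul_eq_mul, mul_one] at hx
      exact hx
    · have hx := congrArg (phiDet (2*r) (2*m) s₂) hab
      rw [map_add, map_smul, map_smul, map_zero, h21, h22, smul_zero, zero_add,
        smul_eq_mul, mul_one] at hx
      exact hx
  have hli : LinearIndependent ℂ
      ![(⟨W₁, hW₁mem⟩ : ⋀[ℂ]^(2*m) (Fin (2*r) → ℂ)), ⟨W₂, hW₂mem⟩] := by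
    rw [LinearIndependent.pair_iff]
    intro a b hab
    apply hind a b
    have hc := congrArg Subtype.val hab
    simpa only [Submodule.coe_add, SetLike.val_smul, ZeroMemClass.coe_zero] using hc
  constructor
  · refine not_multFree_of_two _ ℂ (Representation.trivial ℂ _ ℂ) (trivial_irred _)
      (LinearMap.toSpanSingleton ℂ _ ⟨W₁, hW₁mem⟩) (LinearMap.toSpanSingleton ℂ _ ⟨W₂, hW₂mem⟩)
      (span_singleton_equiv _ _ hinv₁) (span_singleton_equiv _ _ hinv₂) ?_
    intro a b hab
    have hx := congrArg (fun F : ℂ →ₗ[ℂ] ↥(⋀[ℂ]^(2*m) (Fin (2*r) → ℂ)) => F 1) hab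
    simp only [LinearMap.add_apply, LinearMap.smul_apply, LinearMap.toSpanSingleton_apply,
      one_smul, LinearMap.zero_apply] at hx
    apply hind a b
    have hc := congrArg Subtype.val hx
    simpa only [Submodule.coe_add, SetLike.val_smul, ZeroMemClass.coe_zero] using hc
  · exact ⟨⟨W₁, hW₁mem⟩, ⟨W₂, hW₂mem⟩, rfl, rfl, hli, fun g => ⟨hinv₁ g, hinv₂ g⟩⟩

lemma unit_mem_SU (A : Matrix (Fin 2) (Fin 2) ℂ) (hU : A * A.conjTranspose = 1)
    (hdet : A.det = 1) : ∃ u : SUgrp 2, suCoeHom 2 u = A := by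
  have hmem : A ∈ Matrix.unitaryGroup (Fin 2) ℂ := by
    rw [Matrix.mem_unitaryGroup_iff, Matrix.star_eq_conjTranspose]
    exact hU
  exact ⟨⟨⟨A, hmem⟩, hdet⟩, rfl⟩

lemma Jsu_exists : ∃ u : SUgrp 2, suCoeHom 2 u = !![0, 1; -1, 0] := by
  apply unit_mem_SU
  · ext i j
    fin_cases i <;> fin_cases j <;>
      simp [Matrix.mul_apply, Fin.sum_univ_two, Matrix.one_apply, Matrix.conjTranspose_apply]
  · simp [Matrix.det_fin_two_of]

lemma Dsu_exists : ∃ u : SUgrp 2, suCoeHom 2 u = !![Complex.I, 0; 0, -Complex.I] := by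
  apply unit_mem_SU
  · ext i j
    fin_cases i <;> fin_cases j <;>
      simp [Matrix.mul_apply, Fin.sum_univ_two, Matrix.one_apply, Matrix.conjTranspose_apply,
        Complex.mul_conj]
  · simp [Matrix.det_fin_two_of]

noncomputable def Jsu : SUgrp 2 := Jsu_exists.choose
noncomputable def Dsu : SUgrp 2 := Dsu_exists.choose
lemma Jsu_coe : suCoeHom 2 Jsu = !![0, 1; -1, 0] := Jsu_exists.choose_spec
lemma Dsu_coe : suCoeHom 2 Dsu = !![Complex.I, 0; 0, -Complex.I] := Dsu_exists.choose_spec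

/-- The standard 2-dimensional representation of `SU(2)^r` via the first factor. -/
def stdRep (r : ℕ) [NeZero r] : Representation ℂ (Fin r → SUgrp 2) (Fin 2 → ℂ) where
  toFun g := Matrix.toLin' (suCoeHom 2 (g 0))
  map_one' := by
    show Matrix.toLin' (suCoeHom 2 ((1 : Fin r → SUgrp 2) 0)) = 1
    rw [show ((1 : Fin r → SUgrp 2) 0) = 1 from rfl, _root_.map_one, Matrix.toLin'_one]
    rfl
  map_mul' g h := by
    show Matrix.toLin' (suCoeHom 2 ((g * h) 0)) = _
    rw [show ((g * h) 0) = g 0 * h 0 from rfl, _root_.map_mul, Matrix.toLin'_mul]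
    rfl

lemma stdRep_irred (r : ℕ) [NeZero r] : IsIrred (stdRep r) := by
  refine ⟨inferInstance, fun W hW => ?_⟩
  rcases eq_or_ne W ⊥ with h | h
  · exact Or.inl h
  refine Or.inr ?_
  obtain ⟨v, hvW, hv0⟩ := (Submodule.ne_bot_iff W).1 h
  have hact : ∀ (u : SUgrp 2) (x : Fin 2 → ℂ), x ∈ W →
      Matrix.toLin' (suCoeHom 2 u) x ∈ W := fun u x hx => hW (fun _ => u) x hx
  have hDv : Matrix.toLin' (suCoeHom 2 Dsu) v ∈ W := hact Dsu v hvW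
  have hDv_eq : Matrix.toLin' (suCoeHom 2 Dsu) v
      = fun i => if i = 0 then Complex.I * v 0 else -Complex.I * v 1 := by
    rw [Dsu_coe, Matrix.toLin'_apply]
    funext i
    fin_cases i <;>
      simp [Matrix.mulVec, dotProduct, Fin.sum_univ_two]
  have hs0 : (Pi.single 0 (v 0) : Fin 2 → ℂ) ∈ W := by
    have hcomb : (Pi.single 0 (v 0) : Fin 2 → ℂ)
        = (2 * Complex.I)⁻¹ • (Matrix.toLin' (suCoeHom 2 Dsu) v + Complex.I • v) := by
      rw [hDv_eq]
      funext i
      fin_cases i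
      · simp [Pi.single_apply]
        field_simp
        linear_combination (2 * v 0) * Complex.I_sq
      · simp [Pi.single_apply]
    rw [hcomb]
    exact W.smul_mem _ (W.add_mem hDv (W.smul_mem _ hvW))
  have hs1 : (Pi.single 1 (v 1) : Fin 2 → ℂ) ∈ W := by
    have hcomb : (Pi.single 1 (v 1) : Fin 2 → ℂ)
        = (2 * Complex.I)⁻¹ • (Complex.I • v - Matrix.toLin' (suCoeHom 2 Dsu) v) := by
      rw [hDv_eq]
      funext i
      fin_cases i
      · simp [Pi.single_apply]
      · simp [Pi.single_apply]
        field_simp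
        linear_combination (2 * v 1) * Complex.I_sq
    rw [hcomb]
    exact W.smul_mem _ (W.sub_mem (W.smul_mem _ hvW) hDv)
  have hJ : ∀ (a : Fin 2) (c : ℂ), (Pi.single a c : Fin 2 → ℂ) ∈ W →
      (Pi.single a 1 : Fin 2 → ℂ) ∈ W ∨ c = 0 := by
    intro a c hc
    rcases eq_or_ne c 0 with h0 | h0
    · exact Or.inr h0
    · left
      have : (Pi.single a 1 : Fin 2 → ℂ) = c⁻¹ • (Pi.single a c : Fin 2 → ℂ) := by
        funext i
        rcases eq_or_ne i a with rfl | hia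
        · simp [inv_mul_cancel₀ h0]
        · simp [Pi.single_eq_of_ne hia]
      rw [this]
      exact W.smul_mem _ hc
  have hJ0 : Matrix.toLin' (suCoeHom 2 Jsu) (Pi.single 1 1 : Fin 2 → ℂ)
      = (Pi.single 0 1 : Fin 2 → ℂ) := by
    rw [Jsu_coe, Matrix.toLin'_apply]
    funext i
    fin_cases i <;> simp [Matrix.mulVec, dotProduct, Fin.sum_univ_two, Pi.single_apply]
  have hJ1 : Matrix.toLin' (suCoeHom 2 Jsu) (Pi.single 0 1 : Fin 2 → ℂ)
      = -(Pi.single 1 1 : Fin 2 → ℂ) := by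
    rw [Jsu_coe, Matrix.toLin'_apply]
    funext i
    fin_cases i <;> simp [Matrix.mulVec, dotProduct, Fin.sum_univ_two, Pi.single_apply]
  have hboth : (Pi.single 0 1 : Fin 2 → ℂ) ∈ W ∧ (Pi.single 1 1 : Fin 2 → ℂ) ∈ W := by
    rcases hJ 0 (v 0) hs0 with h0 | h0
    · refine ⟨h0, ?_⟩
      have := hact Jsu _ h0
      rw [hJ1] at this
      simpa using W.neg_mem this
    · rcases hJ 1 (v 1) hs1 with h1 | h1
      · have := hact Jsu _ h1
        rw [hJ0] at this
        exact ⟨this, h1⟩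
      · exfalso
        apply hv0
        funext i
        fin_cases i <;> simp [h0, h1]
  refine Submodule.eq_top_iff'.2 fun x => ?_
  have hx : x = x 0 • (Pi.single 0 1 : Fin 2 → ℂ) + x 1 • (Pi.single 1 1 : Fin 2 → ℂ) := by
    funext i
    fin_cases i <;> simp [Pi.single_apply]
  rw [hx]
  exact W.add_mem (W.smul_mem _ hboth.1) (W.smul_mem _ hboth.2)

/-- embedding of `ℂ²` into the first block of `ℂ^{2r}`. -/
noncomputable def L0 (r : ℕ) [NeZero r] : (Fin 2 → ℂ) →ₗ[ℂ] (Fin (2*r) → ℂ) :=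
  (LinearMap.toSpanSingleton ℂ _ (Eb r 0 0)).comp (LinearMap.proj 0)
    + (LinearMap.toSpanSingleton ℂ _ (Eb r 1 0)).comp (LinearMap.proj 1)

lemma L0_apply (r : ℕ) [NeZero r] (v : Fin 2 → ℂ) :
    L0 r v = v 0 • Eb r 0 0 + v 1 • Eb r 1 0 := rfl

lemma L0_comm (r : ℕ) [NeZero r] (g : Fin r → SUgrp 2) (v : Fin 2 → ℂ) :
    Matrix.toLin' (suBlockMatrixHom r g) (L0 r v) = L0 r (stdRep r g v) := by
  rw [L0_apply, map_add, map_smul, map_smul, block_apply, block_apply]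
  have hstd : stdRep r g v
      = fun i => suCoeHom 2 (g 0) i 0 * v 0 + suCoeHom 2 (g 0) i 1 * v 1 := by
    show Matrix.toLin' (suCoeHom 2 (g 0)) v = _
    rw [Matrix.toLin'_apply]
    funext i
    simp [Matrix.mulVec, dotProduct, Fin.sum_univ_two]
  rw [L0_apply, hstd]
  show v 0 • (suCoeHom 2 (g 0) 0 0 • Eb r 0 0 + suCoeHom 2 (g 0) 1 0 • Eb r 1 0)
      + v 1 • (suCoeHom 2 (g 0) 0 1 • Eb r 0 0 + suCoeHom 2 (g 0) 1 1 • Eb r 1 0)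
    = (suCoeHom 2 (g 0) 0 0 * v 0 + suCoeHom 2 (g 0) 0 1 * v 1) • Eb r 0 0
      + (suCoeHom 2 (g 0) 1 0 * v 0 + suCoeHom 2 (g 0) 1 1 * v 1) • Eb r 1 0
  module

lemma iota_mul_ιMulti {M : Type*} [AddCommGroup M] [Module ℂ M] {k : ℕ} (x : M)
    (u : Fin k → M) :
    ExteriorAlgebra.ι ℂ x * ExteriorAlgebra.ιMulti ℂ k u
      = ExteriorAlgebra.ιMulti ℂ (k+1) (Fin.cons x u) := by
  rw [ExteriorAlgebra.ιMulti_succ_apply]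
  rfl

set_option maxHeartbeats 1000000 in
lemma odd_core (r m : ℕ) (hr : 2 ≤ r) (hm : 1 ≤ m) (hmr : m + 2 ≤ r) :
    ¬ MultFree (extPowRep (suBlockMatrixHom r) (2*m+1)) := by
  haveI : NeZero r := ⟨by omega⟩
  -- evaluation index functions
  set c₁ : Fin (2*m+1) → Fin (2*r) :=
    fun t => ⟨if (t : ℕ) = 0 then 0 else (t : ℕ) + 1, by have := t.isLt; split <;> omega⟩
    with hc₁d
  set c₂ : Fin (2*m+1) → Fin (2*r) :=
    fun t => ⟨if (t : ℕ) = 0 then 0 else if (t : ℕ) < 2*m - 1 then (t : ℕ) + 1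
      else (t : ℕ) + 3, by have := t.isLt; split <;> [omega; split <;> omega]⟩
    with hc₂d
  have hc₁ : ∀ t : Fin (2*m+1), (c₁ t : ℕ) = if (t : ℕ) = 0 then 0 else (t : ℕ) + 1 :=
    fun t => rfl
  have hc₂ : ∀ t : Fin (2*m+1), (c₂ t : ℕ)
      = if (t : ℕ) = 0 then 0 else if (t : ℕ) < 2*m - 1 then (t : ℕ) + 1 else (t : ℕ) + 3 :=
    fun t => rfl
  -- block functions and invariant pair wedges
  have hv₁ : Fin.cons (Eb r 0 0)
        (pairVec r m (fun k => (⟨(k : ℕ) + 1, by have := k.isLt; omega⟩ : Fin r)))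
      = fun t => (Pi.single (c₁ t) 1 : Fin (2*r) → ℂ) := by
    funext t
    refine Fin.cases ?_ ?_ t
    · refine congrArg (fun i => (Pi.single i 1 : Fin (2*r) → ℂ)) (Fin.ext ?_)
      rw [pairEquiv_val, hc₁]
      simp
    · intro j
      rw [Fin.cons_succ]
      show (Pi.single (pairEquiv r _) 1 : Fin (2*r) → ℂ) = _
      refine congrArg (fun i => (Pi.single i 1 : Fin (2*r) → ℂ)) (Fin.ext ?_)
      rw [pairEquiv_val, hc₁]
      show 2 * ((j : ℕ)/2 + 1) + (j : ℕ) % 2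
        = if (j : ℕ) + 1 = 0 then 0 else ((j : ℕ) + 1) + 1
      rw [if_neg (by omega)]
      omega
  have hv₂ : Fin.cons (Eb r 0 0)
        (pairVec r m (fun k => (⟨if (k : ℕ) < m - 1 then (k : ℕ) + 1 else (k : ℕ) + 2,
          by have := k.isLt; split <;> omega⟩ : Fin r)))
      = fun t => (Pi.single (c₂ t) 1 : Fin (2*r) → ℂ) := by
    funext t
    refine Fin.cases ?_ ?_ t
    · refine congrArg (fun i => (Pi.single i 1 : Fin (2*r) → ℂ)) (Fin.ext ?_)
      rw [pairEquiv_val, hc₂]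
      simp
    · intro j
      rw [Fin.cons_succ]
      show (Pi.single (pairEquiv r _) 1 : Fin (2*r) → ℂ) = _
      refine congrArg (fun i => (Pi.single i 1 : Fin (2*r) → ℂ)) (Fin.ext ?_)
      rw [pairEquiv_val, hc₂]
      show 2 * (if (j : ℕ)/2 < m - 1 then (j : ℕ)/2 + 1 else (j : ℕ)/2 + 2) + (j : ℕ) % 2
        = if (j : ℕ) + 1 = 0 then 0
          else if (j : ℕ) + 1 < 2*m - 1 then ((j : ℕ) + 1) + 1 else ((j : ℕ) + 1) + 3
      by_cases hcase : (j : ℕ)/2 < m - 1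
      · rw [if_pos hcase, if_neg (by omega), if_pos (by omega)]
        omega
      · rw [if_neg hcase, if_neg (by omega), if_neg (by omega)]
        have := j.isLt
        omega
  -- ambient equivariant maps
  set Q₁ := ExteriorAlgebra.ιMulti ℂ (2*m)
    (pairVec r m (fun k => (⟨(k : ℕ) + 1, by have := k.isLt; omega⟩ : Fin r))) with hQ₁
  set Q₂ := ExteriorAlgebra.ιMulti ℂ (2*m)
    (pairVec r m (fun k => (⟨if (k : ℕ) < m - 1 then (k : ℕ) + 1 else (k : ℕ) + 2,
      by have := k.isLt; split <;> omega⟩ : Fin r))) with hQ₂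
  set Famb₁ : (Fin 2 → ℂ) →ₗ[ℂ] ExteriorAlgebra ℂ (Fin (2*r) → ℂ) :=
    (LinearMap.mulRight ℂ Q₁).comp ((ExteriorAlgebra.ι ℂ).comp (L0 r)) with hF₁d
  set Famb₂ : (Fin 2 → ℂ) →ₗ[ℂ] ExteriorAlgebra ℂ (Fin (2*r) → ℂ) :=
    (LinearMap.mulRight ℂ Q₂).comp ((ExteriorAlgebra.ι ℂ).comp (L0 r)) with hF₂d
  have hF₁v : ∀ v, Famb₁ v = ExteriorAlgebra.ι ℂ (L0 r v) * Q₁ := fun v => rfl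
  have hF₂v : ∀ v, Famb₂ v = ExteriorAlgebra.ι ℂ (L0 r v) * Q₂ := fun v => rfl
  have hmem₁ : ∀ v, Famb₁ v ∈ ⋀[ℂ]^(2*m+1) (Fin (2*r) → ℂ) := by
    intro v
    rw [hF₁v, hQ₁, iota_mul_ιMulti]
    exact ExteriorAlgebra.ιMulti_range ℂ _ (Set.mem_range_self _)
  have hmem₂ : ∀ v, Famb₂ v ∈ ⋀[ℂ]^(2*m+1) (Fin (2*r) → ℂ) := by
    intro v
    rw [hF₂v, hQ₂, iota_mul_ιMulti]
    exact ExteriorAlgebra.ιMulti_range ℂ _ (Set.mem_range_self _)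
  set F₁ : (Fin 2 → ℂ) →ₗ[ℂ] ↥(⋀[ℂ]^(2*m+1) (Fin (2*r) → ℂ)) :=
    Famb₁.codRestrict _ hmem₁ with hF₁r
  set F₂ : (Fin 2 → ℂ) →ₗ[ℂ] ↥(⋀[ℂ]^(2*m+1) (Fin (2*r) → ℂ)) :=
    Famb₂.codRestrict _ hmem₂ with hF₂r
  have hQinv₁ : ∀ g : Fin r → SUgrp 2,
      ExteriorAlgebra.map (Matrix.toLin' (suBlockMatrixHom r g)) Q₁ = Q₁ := by
    intro g; rw [hQ₁]; exact inv_wedge r m g _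
  have hQinv₂ : ∀ g : Fin r → SUgrp 2,
      ExteriorAlgebra.map (Matrix.toLin' (suBlockMatrixHom r g)) Q₂ = Q₂ := by
    intro g; rw [hQ₂]; exact inv_wedge r m g _
  have hequiv₁ : F₁ ∈ EquivMaps (stdRep r) (extPowRep (suBlockMatrixHom r) (2*m+1)) := by
    intro g
    refine LinearMap.ext fun v => Subtype.ext ?_
    show Famb₁ (stdRep r g v)
      = (extPowRep (suBlockMatrixHom r) (2*m+1) g (F₁ v) : ExteriorAlgebra ℂ (Fin (2*r) → ℂ))
    rw [extPowRep_coe]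
    show _ = ExteriorAlgebra.map (Matrix.toLin' (suBlockMatrixHom r g)) (Famb₁ v)
    rw [hF₁v, hF₁v, map_mul, hQinv₁ g, ExteriorAlgebra.map_apply_ι, L0_comm]
  have hequiv₂ : F₂ ∈ EquivMaps (stdRep r) (extPowRep (suBlockMatrixHom r) (2*m+1)) := by
    intro g
    refine LinearMap.ext fun v => Subtype.ext ?_
    show Famb₂ (stdRep r g v)
      = (extPowRep (suBlockMatrixHom r) (2*m+1) g (F₂ v) : ExteriorAlgebra ℂ (Fin (2*r) → ℂ))
    rw [extPowRep_coe]
    show _ = ExteriorAlgebra.map (Matrix.toLin' (suBlockMatrixHom r g)) (Famb₂ v)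
    rw [hF₂v, hF₂v, map_mul, hQinv₂ g, ExteriorAlgebra.map_apply_ι, L0_comm]
  -- evaluation at the first basis vector
  have hL0e : L0 r (Pi.single 0 1 : Fin 2 → ℂ) = Eb r 0 0 := by
    rw [L0_apply]
    simp
  have hW₁ : Famb₁ (Pi.single 0 1 : Fin 2 → ℂ)
      = ExteriorAlgebra.ιMulti ℂ (2*m+1) (fun t => (Pi.single (c₁ t) 1 : Fin (2*r) → ℂ)) := by
    rw [hF₁v, hL0e, hQ₁, iota_mul_ιMulti, hv₁]
  have hW₂ : Famb₂ (Pi.single 0 1 : Fin 2 → ℂ)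
      = ExteriorAlgebra.ιMulti ℂ (2*m+1) (fun t => (Pi.single (c₂ t) 1 : Fin (2*r) → ℂ)) := by
    rw [hF₂v, hL0e, hQ₂, iota_mul_ιMulti, hv₂]
  -- determinant functionals
  have hc₁inj : Function.Injective c₁ := by
    intro x y h
    have hval := congrArg Fin.val h
    rw [hc₁ x, hc₁ y] at hval
    apply Fin.ext
    split_ifs at hval <;> omega
  have hc₂inj : Function.Injective c₂ := by
    intro x y h
    have hval := congrArg Fin.val h
    rw [hc₂ x, hc₂ y] at hval
    apply Fin.ext
    split_ifs at hval <;> omega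
  have h11 : phiDet (2*r) (2*m+1) c₁
      (ExteriorAlgebra.ιMulti ℂ (2*m+1) (fun t => (Pi.single (c₁ t) 1 : Fin (2*r) → ℂ))) = 1 :=
    phiDet_diag _ _ _ hc₁inj
  have h22 : phiDet (2*r) (2*m+1) c₂
      (ExteriorAlgebra.ιMulti ℂ (2*m+1) (fun t => (Pi.single (c₂ t) 1 : Fin (2*r) → ℂ))) = 1 :=
    phiDet_diag _ _ _ hc₂inj
  have h12 : phiDet (2*r) (2*m+1) c₁
      (ExteriorAlgebra.ιMulti ℂ (2*m+1) (fun t => (Pi.single (c₂ t) 1 : Fin (2*r) → ℂ))) = 0 := by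
    apply phiDet_off (2*r) (2*m+1) c₁ c₂ ⟨2*m, by omega⟩
    intro j h
    have hval := congrArg Fin.val h
    rw [hc₂ _, hc₁ j] at hval
    have h2m : ((⟨2*m, by omega⟩ : Fin (2*m+1)) : ℕ) = 2*m := rfl
    rw [h2m] at hval
    have := j.isLt
    split_ifs at hval <;> omega
  have h21 : phiDet (2*r) (2*m+1) c₂
      (ExteriorAlgebra.ιMulti ℂ (2*m+1) (fun t => (Pi.single (c₁ t) 1 : Fin (2*r) → ℂ))) = 0 := by
    apply phiDet_off (2*r) (2*m+1) c₂ c₁ ⟨2*m-1, by omega⟩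
    intro j h
    have hval := congrArg Fin.val h
    rw [hc₁ _, hc₂ j] at hval
    have h2m : ((⟨2*m-1, by omega⟩ : Fin (2*m+1)) : ℕ) = 2*m-1 := rfl
    rw [h2m] at hval
    have := j.isLt
    split_ifs at hval <;> omega
  -- conclude
  refine not_multFree_of_two _ (Fin 2 → ℂ) (stdRep r) (stdRep_irred r) F₁ F₂ hequiv₁ hequiv₂ ?_
  intro a b hab
  have hx := congrArg (fun F : (Fin 2 → ℂ) →ₗ[ℂ] ↥(⋀[ℂ]^(2*m+1) (Fin (2*r) → ℂ)) =>
    F (Pi.single 0 1 : Fin 2 → ℂ)) hab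
  simp only [LinearMap.add_apply, LinearMap.smul_apply, LinearMap.zero_apply] at hx
  have hvals := congrArg Subtype.val hx
  simp only [Submodule.coe_add, SetLike.val_smul, ZeroMemClass.coe_zero] at hvals
  have hvals' : a • Famb₁ (Pi.single 0 1 : Fin 2 → ℂ)
      + b • Famb₂ (Pi.single 0 1 : Fin 2 → ℂ) = 0 := hvals
  rw [hW₁, hW₂] at hvals'
  constructor
  · have h := congrArg (phiDet (2*r) (2*m+1) c₁) hvals'
    rw [map_add, map_smul, map_smul, map_zero, h11, h12, smul_zero, add_zero,
      smul_eq_mul, mul_one] at h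
    exact h
  · have h := congrArg (phiDet (2*r) (2*m+1) c₂) hvals'
    rw [map_add, map_smul, map_smul, map_zero, h21, h22, smul_zero, zero_add,
      smul_eq_mul, mul_one] at h
    exact h

/-- for `r ≥ 2` and `2 ≤ n ≤ 2r-2`, the representation of `SU(2)^r`
(embedded block-diagonally in `U(2r)`) on the exterior power `⋀^n(ℂ^{2r})` is not
multiplicity-free; in particular, for `n` even the vectors
`(e₁∧e₂) ∧ ⋯ ∧ (e_{n-3}∧e_{n-2}) ∧ (e_{n-1}∧e_n)` and
`(e₁∧e₂) ∧ ⋯ ∧ (e_{n-3}∧e_{n-2}) ∧ (e_{n+1}∧e_{n+2})` span two distinct copies of the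
trivial representation of `SU(2)^r`. -/
theorem statement_14 (r n : ℕ) (hr : 2 ≤ r) (h2 : 2 ≤ n) (hn : n ≤ 2 * r - 2) :
    ¬ MultFree (extPowRep (suBlockMatrixHom r) n) ∧
    (n % 2 = 0 →
      ∃ w₁ w₂ : ⋀[ℂ]^n (Fin (2 * r) → ℂ),
        (w₁ : ExteriorAlgebra ℂ (Fin (2 * r) → ℂ))
          = ExteriorAlgebra.ιMulti ℂ n (fun t : Fin n =>
              Pi.single (⟨(t : ℕ), by have := t.isLt; omega⟩ : Fin (2 * r)) (1 : ℂ)) ∧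
        (w₂ : ExteriorAlgebra ℂ (Fin (2 * r) → ℂ))
          = ExteriorAlgebra.ιMulti ℂ n (fun t : Fin n =>
              Pi.single (⟨if (t : ℕ) < n - 2 then (t : ℕ) else (t : ℕ) + 2,
                by have := t.isLt; split <;> omega⟩ : Fin (2 * r)) (1 : ℂ)) ∧
        LinearIndependent ℂ ![w₁, w₂] ∧
        ∀ g : Fin r → SUgrp 2,
          extPowRep (suBlockMatrixHom r) n g w₁ = w₁ ∧
          extPowRep (suBlockMatrixHom r) n g w₂ = w₂) := by
  by_cases hpar : n % 2 = 0
  · obtain ⟨m, rfl⟩ : ∃ m, n = 2 * m := ⟨n / 2, by omega⟩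
    have hcore := even_core r m hr (by omega) (by omega)
      (fun t => ⟨(t : ℕ), by have := t.isLt; omega⟩)
      (fun t => ⟨if (t : ℕ) < 2*m - 2 then (t : ℕ) else (t : ℕ) + 2,
        by have := t.isLt; split <;> omega⟩)
      (fun t => rfl) (fun t => rfl)
    exact ⟨hcore.1, fun _ => hcore.2⟩
  · refine ⟨?_, fun h => absurd h hpar⟩
    obtain ⟨m, rfl⟩ : ∃ m, n = 2*m+1 := ⟨n / 2, by omega⟩
    exact odd_core r m hr (by omega) (by omega)
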